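/- Let δ > 1 and 0 < r < δ·(δ−1)^{(1/δ)−1}, and define H(u) = r·u^δ/(1+u^δ) for u ≥ 0. Then H(u) < u for every u > 0 (so 0 is the only fixed point of H), and for every initial condition u₀ ≥ 0 the orbit u_{t+1} = H(u_t) converges to 0 as t → ∞. -/

import Mathlib

open Real Filter

lemma key_ineq (r δ : ℝ) (hδ : 1 < δ) (hr0 : 0 < r)
    (hr : r < δ * (δ - 1) ^ (1 / δ - 1)) :
    ∀ v : ℝ, 0 ≤ v → r * v ^ ((δ - 1) / δ) < 1 + v := by
  have hδ0 : (0:ℝ) < δ := by linarith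
  have hδ1 : (0:ℝ) < δ - 1 := by linarith
  set b : ℝ := (δ - 1) / δ with hbdef
  have hb0 : 0 < b := div_pos hδ1 hδ0
  set C : ℝ := (1 / δ) * (r ^ δ * b ^ (δ - 1)) with hCdef
  have hC1 : C < 1 := by
    have h1 : r ^ δ < (δ * (δ - 1) ^ (1 / δ - 1)) ^ δ :=
      Real.rpow_lt_rpow hr0.le hr hδ0
    have h2 : (δ * (δ - 1) ^ (1 / δ - 1)) ^ δ = δ ^ δ * (δ - 1) ^ (1 - δ) := by
      rw [Real.mul_rpow hδ0.le (Real.rpow_nonneg hδ1.le _),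
        ← Real.rpow_mul hδ1.le]
      congr 1
      field_simp
    have hb : b ^ (δ - 1) = (δ - 1) ^ (δ - 1) / δ ^ (δ - 1) :=
      Real.div_rpow hδ1.le hδ0.le _
    have hcomb : δ ^ δ * (δ - 1) ^ (1 - δ) * ((δ - 1) ^ (δ - 1) / δ ^ (δ - 1)) = δ := by
      rw [div_eq_mul_inv, ← Real.rpow_neg hδ0.le]
      calc δ ^ δ * (δ - 1) ^ (1 - δ) * ((δ - 1) ^ (δ - 1) * δ ^ (-(δ - 1)))
          = (δ ^ δ * δ ^ (-(δ - 1))) * ((δ - 1) ^ (1 - δ) * (δ - 1) ^ (δ - 1)) := by ring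
        _ = δ ^ (δ + -(δ - 1)) * (δ - 1) ^ ((1 - δ) + (δ - 1)) := by
            rw [Real.rpow_add hδ0, Real.rpow_add hδ1]
        _ = δ := by norm_num
    have hbpos : 0 < b ^ (δ - 1) := Real.rpow_pos_of_pos hb0 _
    have : r ^ δ * b ^ (δ - 1) < δ := by
      calc r ^ δ * b ^ (δ - 1) < δ ^ δ * (δ - 1) ^ (1 - δ) * b ^ (δ - 1) := by
            rw [← h2]; exact mul_lt_mul_of_pos_right h1 hbpos
        _ = δ := by rw [hb]; exact hcomb
    rw [hCdef]
    rw [one_div, inv_mul_lt_iff₀ hδ0, mul_one]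
    exact this
  intro v hv
  have hrb : r * v ^ b ≤ C + v := by
    have hp₁ : (0:ℝ) ≤ r ^ δ * b ^ (δ - 1) :=
      mul_nonneg (Real.rpow_nonneg hr0.le _) (Real.rpow_nonneg hb0.le _)
    have hp₂ : (0:ℝ) ≤ v / b := div_nonneg hv hb0.le
    have hw : 1 / δ + b = 1 := by rw [hbdef]; field_simp; ring
    have geo := Real.geom_mean_le_arith_mean2_weighted (by positivity : (0:ℝ) ≤ 1/δ)
      hb0.le hp₁ hp₂ hw
    have hL : (r ^ δ * b ^ (δ - 1)) ^ (1 / δ) * (v / b) ^ b = r * v ^ b := by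
      rw [Real.mul_rpow (Real.rpow_nonneg hr0.le _) (Real.rpow_nonneg hb0.le _),
        ← Real.rpow_mul hr0.le, ← Real.rpow_mul hb0.le,
        Real.div_rpow hv hb0.le]
      have e1 : δ * (1 / δ) = 1 := by field_simp
      have e2 : (δ - 1) * (1 / δ) = b := by rw [hbdef]; ring
      have hbb : b ^ b ≠ 0 := (Real.rpow_pos_of_pos hb0 _).ne'
      rw [e1, e2, Real.rpow_one]
      field_simp
    have hR : 1 / δ * (r ^ δ * b ^ (δ - 1)) + b * (v / b) = C + v := by
      rw [hCdef, mul_div_cancel₀ _ hb0.ne']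
    rw [hL, hR] at geo
    exact geo
  calc r * v ^ b ≤ C + v := hrb
    _ < 1 + v := by linarith

/-- Sigmoid Beverton–Holt map with `δ > 1` and `0 < r < δ(δ-1)^{1/δ-1}`:
`H u < u` for every `u > 0` (so `0` is the only fixed point), and every orbit
starting at `u₀ ≥ 0` converges to `0`. -/
theorem stmt_1 (r δ : ℝ) (hδ : 1 < δ) (hr0 : 0 < r)
    (hr : r < δ * (δ - 1) ^ (1 / δ - 1))
    (H : ℝ → ℝ) (hH : ∀ u : ℝ, H u = r * u ^ δ / (1 + u ^ δ)) :
    (∀ u : ℝ, 0 < u → H u < u) ∧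
    (∀ u : ℕ → ℝ, 0 ≤ u 0 → (∀ t : ℕ, u (t + 1) = H (u t)) →
      Filter.Tendsto u Filter.atTop (nhds 0)) := by
  have hδ0 : (0:ℝ) < δ := by linarith
  have key := key_ineq r δ hδ hr0 hr
  have hmain : ∀ u : ℝ, 0 < u → H u < u := by
    intro u hu
    have hvδ : (0:ℝ) ≤ u ^ δ := Real.rpow_nonneg hu.le _
    have hkey := key (u ^ δ) hvδ
    have hvb : (u ^ δ) ^ ((δ - 1) / δ) = u ^ (δ - 1) := by
      rw [← Real.rpow_mul hu.le]
      congr 1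
      field_simp
    rw [hvb] at hkey
    rw [hH]
    rw [div_lt_iff₀ (by linarith : (0:ℝ) < 1 + u ^ δ)]
    calc r * u ^ δ = (r * u ^ (δ - 1)) * u := by
          rw [mul_assoc, ← Real.rpow_add_one hu.ne' (δ - 1)]
          norm_num
      _ < (1 + u ^ δ) * u := mul_lt_mul_of_pos_right hkey hu
      _ = u * (1 + u ^ δ) := mul_comm _ _
  refine ⟨hmain, ?_⟩
  intro u hu0 hrec
  -- nonnegativity
  have Hnonneg : ∀ x : ℝ, 0 ≤ x → 0 ≤ H x := by
    intro x hx
    rw [hH]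
    have := Real.rpow_nonneg hx δ
    positivity
  have hunn : ∀ t, 0 ≤ u t := by
    intro t
    induction t with
    | zero => exact hu0
    | succ n ih => rw [hrec]; exact Hnonneg _ ih
  have hanti : Antitone u := by
    apply antitone_nat_of_succ_le
    intro n
    rcases eq_or_lt_of_le (hunn n) with h | h
    · rw [hrec, ← h, hH]
      rw [Real.zero_rpow hδ0.ne']
      norm_num
    · rw [hrec]; exact (hmain _ h).le
  have hbdd : BddBelow (Set.range u) := ⟨0, by rintro x ⟨t, rfl⟩; exact hunn t⟩
  have htend : Tendsto u atTop (nhds (⨅ t, u t)) := tendsto_atTop_ciInf hanti hbdd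
  set L := ⨅ t, u t with hLdef
  have hL0 : 0 ≤ L := le_ciInf hunn
  rcases eq_or_lt_of_le hL0 with h0 | h0
  · rwa [← h0] at htend
  · exfalso
    have hcont : ContinuousAt H L := by
      have hfun : H = fun x => r * x ^ δ / (1 + x ^ δ) := funext hH
      rw [hfun]
      have hrpow : ContinuousAt (fun x : ℝ => x ^ δ) L :=
        Real.continuousAt_rpow_const L δ (Or.inl h0.ne')
      have hLδ : (0:ℝ) < 1 + L ^ δ := by
        have := Real.rpow_nonneg hL0 δ
        linarith
      exact (continuousAt_const.mul hrpow).div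
        (continuousAt_const.add hrpow) hLδ.ne'
    have h1 : Tendsto (fun t => u (t + 1)) atTop (nhds L) :=
      htend.comp (tendsto_add_atTop_nat 1)
    have h2 : Tendsto (fun t => H (u t)) atTop (nhds (H L)) :=
      hcont.tendsto.comp htend
    have h3 : (fun t => u (t + 1)) = fun t => H (u t) := funext hrec
    rw [h3] at h1
    have hHL : H L = L := tendsto_nhds_unique h2 h1
    exact absurd hHL (ne_of_lt (hmain L h0))
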